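/- (Key equivalence in the proof of Theorem 2 of the paper.) Let V be a finite type, W : V → V → ℝ a row-stochastic matrix, α ∈ (0,1), and u ∈ V with W u u = 0. Let A* ⊆ V be a set with σ := ∑_{m ∈ A*} W u m < 1, let W_{A*} be the renormalized-deletion matrix of W at u with respect to A*, and let W_r be the matrix obtained from W by replacing row u with the zero row. Then for all rec, rec* ∈ V with rec ≠ u, rec* ≠ u, W u rec = 0 and W u rec* = 0: PPR_{W_{A*}}(u, rec) < PPR_{W_{A*}}(u, rec*) if and only if ∑_{n ∉ A*} W u n · ( PPR_{W_r}(n, rec) − PPR_{W_r}(n, rec*) ) < 0. In particular, whether rec* outranks rec after removing the edges into A* can be decided solely from Personalized PageRank scores computed in the single graph with all outgoing edges of u removed and the original (unrenormalized) weights W u n. -/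

import Mathlib

open scoped BigOperators

/-- A matrix is row-stochastic if all entries are nonnegative and each row sums to exactly 1. -/
def RowStochastic {V : Type*} [Fintype V] (W : Matrix V V ℝ) : Prop :=
  (∀ i j, 0 ≤ W i j) ∧ ∀ i, ∑ j, W i j = 1

/-- Personalized PageRank: `PPR W α s v = α * ∑' l, (1-α)^l * (W^l) s v`. -/
noncomputable def PPR {V : Type*} [Fintype V] [DecidableEq V]
    (W : Matrix V V ℝ) (α : ℝ) (s v : V) : ℝ :=
  α * ∑' l : ℕ, (1 - α) ^ l * (W ^ l) s v

/-- `zeroRow W u` is `W` with row `u` replaced by the zero row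
(removal of all outgoing edges of `u`). -/
def zeroRow {V : Type*} [DecidableEq V] (W : Matrix V V ℝ) (u : V) : Matrix V V ℝ :=
  fun n m => if n = u then 0 else W n m

/-- The renormalized-deletion matrix of `W` at `u` with respect to `A`: it agrees with `W`
outside row `u`; in row `u`, the entries into `A` are set to `0` and the remaining entries
are renormalized by `1 - ∑ x ∈ A, W u x`. -/
noncomputable def renormDel {V : Type*} [Fintype V] [DecidableEq V]
    (W : Matrix V V ℝ) (u : V) (A : Finset V) : Matrix V V ℝ :=
  fun n m =>
    if n = u then (if m ∈ A then 0 else W u m / (1 - ∑ x ∈ A, W u x)) else W n m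

namespace PPRaux

variable {V : Type*} [Fintype V] [DecidableEq V]

/-- Substochastic: nonnegative entries, row sums at most 1. -/
def SubStoch (S : Matrix V V ℝ) : Prop := (∀ i j, 0 ≤ S i j) ∧ ∀ i, ∑ j, S i j ≤ 1

/-- The resolvent series entry: `res S x i j = ∑' l, x^l * (S^l) i j`. -/
noncomputable def res (S : Matrix V V ℝ) (x : ℝ) (i j : V) : ℝ :=
  ∑' l : ℕ, x ^ l * (S ^ l) i j

lemma pow_entry_nonneg {S : Matrix V V ℝ} (h : SubStoch S) (l : ℕ) (i j : V) :
    0 ≤ (S ^ l) i j := by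
  induction l generalizing i j with
  | zero => simp [Matrix.one_apply]; positivity
  | succ l ih =>
    rw [pow_succ, Matrix.mul_apply]
    exact Finset.sum_nonneg fun k _ => mul_nonneg (ih i k) (h.1 k j)

lemma pow_rowsum_le {S : Matrix V V ℝ} (h : SubStoch S) (l : ℕ) (i : V) :
    ∑ j, (S ^ l) i j ≤ 1 := by
  induction l generalizing i with
  | zero => simp [Matrix.one_apply]
  | succ l ih =>
    simp only [pow_succ, Matrix.mul_apply]
    rw [Finset.sum_comm]
    calc ∑ k, ∑ j, (S ^ l) i k * S k j = ∑ k, (S ^ l) i k * ∑ j, S k j := by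
          simp [Finset.mul_sum]
      _ ≤ ∑ k, (S ^ l) i k * 1 :=
          Finset.sum_le_sum fun k _ => mul_le_mul_of_nonneg_left (h.2 k) (pow_entry_nonneg h l i k)
      _ ≤ 1 := by simpa using ih i

lemma pow_entry_le_one {S : Matrix V V ℝ} (h : SubStoch S) (l : ℕ) (i j : V) :
    (S ^ l) i j ≤ 1 :=
  le_trans (Finset.single_le_sum (fun k _ => pow_entry_nonneg h l i k) (Finset.mem_univ j))
    (pow_rowsum_le h l i)

lemma summ {S : Matrix V V ℝ} (h : SubStoch S) {x : ℝ} (hx0 : 0 ≤ x) (hx1 : x < 1) (i j : V) :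
    Summable (fun l : ℕ => x ^ l * (S ^ l) i j) := by
  refine Summable.of_nonneg_of_le
    (fun l => mul_nonneg (pow_nonneg hx0 l) (pow_entry_nonneg h l i j))
    (fun l => ?_) (summable_geometric_of_lt_one hx0 hx1)
  exact mul_le_of_le_one_right (pow_nonneg hx0 l) (pow_entry_le_one h l i j)

lemma rec_right {S : Matrix V V ℝ} (h : SubStoch S) {x : ℝ} (hx0 : 0 ≤ x) (hx1 : x < 1) (i j : V) :
    res S x i j = (if i = j then 1 else 0) + x * ∑ k, res S x i k * S k j := by
  unfold res
  rw [Summable.tsum_eq_zero_add (summ h hx0 hx1 i j)]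
  congr 1
  · simp [Matrix.one_apply]
  · have step : ∀ l : ℕ, x ^ (l + 1) * (S ^ (l + 1)) i j
        = ∑ k, x * ((x ^ l * (S ^ l) i k) * S k j) := by
      intro l
      rw [show (S ^ (l + 1)) = S ^ l * S from pow_succ S l, Matrix.mul_apply, Finset.mul_sum]
      refine Finset.sum_congr rfl fun k _ => by ring
    calc (∑' l : ℕ, x ^ (l + 1) * (S ^ (l + 1)) i j)
        = ∑' l : ℕ, ∑ k, x * ((x ^ l * (S ^ l) i k) * S k j) := tsum_congr step
      _ = ∑ k, ∑' l : ℕ, x * ((x ^ l * (S ^ l) i k) * S k j) := by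
          refine Summable.tsum_finsetSum fun k _ => ?_
          exact ((summ h hx0 hx1 i k).mul_right (S k j)).mul_left x
      _ = x * ∑ k, (∑' l : ℕ, x ^ l * (S ^ l) i k) * S k j := by
          rw [Finset.mul_sum]
          refine Finset.sum_congr rfl fun k _ => ?_
          rw [tsum_mul_left, tsum_mul_right]

lemma rec_left {S : Matrix V V ℝ} (h : SubStoch S) {x : ℝ} (hx0 : 0 ≤ x) (hx1 : x < 1) (i j : V) :
    res S x i j = (if i = j then 1 else 0) + x * ∑ k, S i k * res S x k j := by
  unfold res
  rw [Summable.tsum_eq_zero_add (summ h hx0 hx1 i j)]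
  congr 1
  · simp [Matrix.one_apply]
  · have step : ∀ l : ℕ, x ^ (l + 1) * (S ^ (l + 1)) i j
        = ∑ k, x * (S i k * (x ^ l * (S ^ l) k j)) := by
      intro l
      rw [show (S ^ (l + 1)) = S * S ^ l from pow_succ' S l, Matrix.mul_apply, Finset.mul_sum]
      refine Finset.sum_congr rfl fun k _ => by ring
    calc (∑' l : ℕ, x ^ (l + 1) * (S ^ (l + 1)) i j)
        = ∑' l : ℕ, ∑ k, x * (S i k * (x ^ l * (S ^ l) k j)) := tsum_congr step
      _ = ∑ k, ∑' l : ℕ, x * (S i k * (x ^ l * (S ^ l) k j)) := by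
          refine Summable.tsum_finsetSum fun k _ => ?_
          exact (((summ h hx0 hx1 k j).mul_left (S i k)).mul_left x)
      _ = x * ∑ k, S i k * (∑' l : ℕ, x ^ l * (S ^ l) k j) := by
          rw [Finset.mul_sum]
          refine Finset.sum_congr rfl fun k _ => by rw [tsum_mul_left, tsum_mul_left]

lemma res_ge_one {S : Matrix V V ℝ} (h : SubStoch S) {x : ℝ} (hx0 : 0 ≤ x) (hx1 : x < 1)
    (i : V) : 1 ≤ res S x i i := by
  have hle := Summable.le_tsum (summ h hx0 hx1 i i) 0
    (fun l _ => mul_nonneg (pow_nonneg hx0 l) (pow_entry_nonneg h l i i))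
  simpa [Matrix.one_apply, res] using hle

lemma uniq {S : Matrix V V ℝ} (h : SubStoch S) {x : ℝ} (hx0 : 0 ≤ x) (hx1 : x < 1)
    (d : V → ℝ) (hd : ∀ v, d v = x * ∑ k, d k * S k v) (v : V) : d v = 0 := by
  have key : ∑ w, |d w| ≤ x * ∑ w, |d w| := by
    calc ∑ w, |d w| = ∑ w, |x * ∑ k, d k * S k w| := by
          refine Finset.sum_congr rfl fun w _ => by rw [← hd w]
      _ ≤ ∑ w, x * ∑ k, |d k| * S k w := by
          refine Finset.sum_le_sum fun w _ => ?_
          rw [abs_mul, abs_of_nonneg hx0]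
          refine mul_le_mul_of_nonneg_left ?_ hx0
          refine (Finset.abs_sum_le_sum_abs _ _).trans ?_
          refine Finset.sum_le_sum fun k _ => ?_
          rw [abs_mul, abs_of_nonneg (h.1 k w)]
      _ = x * ∑ k, |d k| * ∑ w, S k w := by
          rw [← Finset.mul_sum, Finset.sum_comm]
          congr 1
          refine Finset.sum_congr rfl fun k _ => ?_
          rw [Finset.mul_sum]
      _ ≤ x * ∑ k, |d k| := by
          refine mul_le_mul_of_nonneg_left ?_ hx0
          calc ∑ k, |d k| * ∑ w, S k w ≤ ∑ k, |d k| * 1 :=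
                Finset.sum_le_sum fun k _ => mul_le_mul_of_nonneg_left (h.2 k) (abs_nonneg _)
            _ = ∑ k, |d k| := by simp
  have h0 : ∑ w, |d w| ≤ 0 := by
    nlinarith [Finset.sum_nonneg (fun w (_ : w ∈ Finset.univ) => abs_nonneg (d w))]
  have := (Finset.sum_eq_zero_iff_of_nonneg (fun w _ => abs_nonneg (d w))).1
    (le_antisymm h0 (Finset.sum_nonneg fun w _ => abs_nonneg (d w))) v (Finset.mem_univ v)
  exact abs_eq_zero.mp this

lemma decomp {M Z : Matrix V V ℝ} (hM : SubStoch M) (hZ : SubStoch Z)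
    {x : ℝ} (hx0 : 0 ≤ x) (hx1 : x < 1) {u : V}
    (hZu : ∀ k, Z u k = 0) (hMZ : ∀ n k, n ≠ u → M n k = Z n k) (v : V) :
    res M x u v = (if u = v then 1 else 0)
      + x * res M x u u * ∑ k, M u k * res Z x k v := by
  classical
  set d : V → ℝ := fun w => res M x u w
      - x * res M x u u * (∑ k, M u k * res Z x k w) - res Z x u w with hd
  have hQuv : ∀ w, res Z x u w = if u = w then 1 else 0 := by
    intro w
    rw [rec_left hZ hx0 hx1 u w]
    have : ∑ k, Z u k * res Z x k w = 0 :=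
      Finset.sum_eq_zero fun k _ => by rw [hZu k, zero_mul]
    rw [this, mul_zero, add_zero]
  have hGrec : ∀ w, (∑ k, M u k * res Z x k w)
      = M u w + x * ∑ k, (∑ m, M u m * res Z x m k) * Z k w := by
    intro w
    calc ∑ k, M u k * res Z x k w
        = ∑ k, M u k * ((if k = w then 1 else 0) + x * ∑ m, res Z x k m * Z m w) :=
          Finset.sum_congr rfl fun k _ => by rw [← rec_right hZ hx0 hx1 k w]
      _ = (∑ k, M u k * (if k = w then 1 else 0))
          + ∑ k, x * (M u k * ∑ m, res Z x k m * Z m w) := by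
          rw [← Finset.sum_add_distrib]
          refine Finset.sum_congr rfl fun k _ => by ring
      _ = M u w + x * ∑ k, (∑ m, M u m * res Z x m k) * Z k w := by
          congr 1
          · simp
          · rw [← Finset.mul_sum]
            congr 1
            calc ∑ k, M u k * ∑ m, res Z x k m * Z m w
                = ∑ k, ∑ m, M u k * res Z x k m * Z m w := by
                  refine Finset.sum_congr rfl fun k _ => ?_
                  rw [Finset.mul_sum]
                  exact Finset.sum_congr rfl fun m _ => by ring
              _ = ∑ m, ∑ k, M u k * res Z x k m * Z m w := Finset.sum_comm
              _ = ∑ m, (∑ k, M u k * res Z x k m) * Z m w := by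
                  refine Finset.sum_congr rfl fun m _ => ?_
                  rw [Finset.sum_mul]
  have hsplit : ∀ w, ∑ k, res M x u k * M k w
      = (∑ k, res M x u k * Z k w) + res M x u u * M u w := by
    intro w
    have h1 : ∀ k, res M x u k * M k w
        = res M x u k * Z k w + (if k = u then res M x u u * M u w else 0) := by
      intro k
      by_cases hk : k = u
      · subst hk; rw [if_pos rfl, hZu w, mul_zero, zero_add]
      · rw [if_neg hk, hMZ k w hk, add_zero]
    rw [Finset.sum_congr rfl fun k _ => h1 k, Finset.sum_add_distrib]
    congr 1
    simp
  have hdrec : ∀ w, d w = x * ∑ k, d k * Z k w := by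
    intro w
    have e2 : ∑ k, d k * Z k w
        = (∑ k, res M x u k * Z k w)
          - x * res M x u u * (∑ k, (∑ m, M u m * res Z x m k) * Z k w)
          - ∑ k, res Z x u k * Z k w := by
      have hterm : ∀ k, d k * Z k w
          = res M x u k * Z k w
            - x * res M x u u * ((∑ m, M u m * res Z x m k) * Z k w)
            - res Z x u k * Z k w := fun k => by simp only [hd]; ring
      rw [Finset.sum_congr rfl fun k _ => hterm k, Finset.sum_sub_distrib,
        Finset.sum_sub_distrib, ← Finset.mul_sum]
    rw [e2]
    simp only [hd]
    rw [rec_right hM hx0 hx1 u w, hsplit w, rec_right hZ hx0 hx1 u w, hGrec w]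
    ring
  have h0 : d v = 0 := uniq hZ hx0 hx1 d hdrec v
  simp only [hd] at h0
  have := hQuv v
  linarith [h0, this.ge, this.le]

end PPRaux

theorem ppr_swap_equivalence
    {V : Type*} [Fintype V] [DecidableEq V] (W : Matrix V V ℝ)
    (hW : RowStochastic W) (α : ℝ) (hα : α ∈ Set.Ioo (0 : ℝ) 1)
    (u : V) (hWuu : W u u = 0)
    (A : Finset V) (hσ : ∑ m ∈ A, W u m < 1) :
    ∀ rec recStar : V, rec ≠ u → recStar ≠ u → W u rec = 0 → W u recStar = 0 →
      (PPR (renormDel W u A) α u rec < PPR (renormDel W u A) α u recStar ↔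
        ∑ n ∈ Aᶜ,
          W u n * (PPR (zeroRow W u) α n rec - PPR (zeroRow W u) α n recStar) < 0) := by
  classical
  intro rec recStar hrec hrecStar hWrec hWrecStar
  obtain ⟨hα0, hα1⟩ := hα
  have hx0 : (0:ℝ) ≤ 1 - α := by linarith
  have hx0' : (0:ℝ) < 1 - α := by linarith
  have hx1 : 1 - α < 1 := by linarith
  have hσ0 : 0 ≤ ∑ m ∈ A, W u m := Finset.sum_nonneg fun m _ => hW.1 u m
  have h1σ : 0 < 1 - ∑ m ∈ A, W u m := by linarith
  set x : ℝ := 1 - α with hxdef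
  set σ : ℝ := ∑ m ∈ A, W u m with hσdef
  set M : Matrix V V ℝ := renormDel W u A with hMdef
  set Z : Matrix V V ℝ := zeroRow W u with hZdef
  have hMu : ∀ k, M u k = if k ∈ A then 0 else W u k / (1 - σ) := fun k => by
    simp [hMdef, renormDel, hσdef]
  have hMn : ∀ n k, n ≠ u → M n k = W n k := fun n k hn => by
    simp [hMdef, renormDel, hn]
  have hZu : ∀ k, Z u k = 0 := fun k => by simp [hZdef, zeroRow]
  have hZn : ∀ n k, n ≠ u → Z n k = W n k := fun n k hn => by simp [hZdef, zeroRow, hn]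
  have hZS : PPRaux.SubStoch Z := by
    constructor
    · intro i j
      by_cases hi : i = u
      · subst hi; rw [hZu]
      · rw [hZn _ _ hi]; exact hW.1 i j
    · intro i
      by_cases hi : i = u
      · subst hi; simp [hZu]
      · calc ∑ j, Z i j = ∑ j, W i j := Finset.sum_congr rfl fun j _ => hZn i j hi
          _ ≤ 1 := (hW.2 i).le
  have hAc : ∑ k ∈ Aᶜ, W u k = 1 - σ := by
    have h := Finset.sum_add_sum_compl A (W u)
    rw [hW.2 u] at h
    rw [hσdef]; linarith
  have hMS : PPRaux.SubStoch M := by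
    constructor
    · intro i j
      by_cases hi : i = u
      · rw [hi, hMu j]
        split
        · exact le_refl 0
        · exact div_nonneg (hW.1 u j) h1σ.le
      · rw [hMn _ _ hi]; exact hW.1 i j
    · intro i
      by_cases hi : i = u
      · rw [hi]
        have : ∑ k, M u k = 1 := by
          calc ∑ k, M u k = ∑ k ∈ A, M u k + ∑ k ∈ Aᶜ, M u k :=
                (Finset.sum_add_sum_compl A _).symm
            _ = 0 + ∑ k ∈ Aᶜ, W u k / (1 - σ) := by
                congr 1
                · exact Finset.sum_eq_zero fun k hk => by rw [hMu k, if_pos hk]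
                · exact Finset.sum_congr rfl fun k hk => by
                    rw [hMu k, if_neg (Finset.mem_compl.mp hk)]
            _ = (∑ k ∈ Aᶜ, W u k) / (1 - σ) := by rw [zero_add, Finset.sum_div]
            _ = 1 := by rw [hAc, div_self (ne_of_gt h1σ)]
        exact this.le
      · calc ∑ j, M i j = ∑ j, W i j := Finset.sum_congr rfl fun j _ => hMn i j hi
          _ ≤ 1 := (hW.2 i).le
  have hMZ : ∀ n k, n ≠ u → M n k = Z n k := fun n k hn => by
    rw [hMn n k hn, hZn n k hn]
  -- abbreviations
  have hPPRM : ∀ v, PPR M α u v = α * PPRaux.res M x u v := fun v => rfl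
  have hPPRZ : ∀ n v, PPR Z α n v = α * PPRaux.res Z x n v := fun n v => rfl
  have hGv : ∀ v, (∑ k, M u k * PPRaux.res Z x k v)
      = (∑ k ∈ Aᶜ, W u k * PPRaux.res Z x k v) / (1 - σ) := by
    intro v
    calc ∑ k, M u k * PPRaux.res Z x k v
        = ∑ k ∈ A, M u k * PPRaux.res Z x k v + ∑ k ∈ Aᶜ, M u k * PPRaux.res Z x k v :=
          (Finset.sum_add_sum_compl A _).symm
      _ = 0 + ∑ k ∈ Aᶜ, (W u k * PPRaux.res Z x k v) / (1 - σ) := by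
          congr 1
          · exact Finset.sum_eq_zero fun k hk => by rw [hMu k, if_pos hk, zero_mul]
          · refine Finset.sum_congr rfl fun k hk => ?_
            rw [hMu k, if_neg (Finset.mem_compl.mp hk), div_mul_eq_mul_div]
      _ = (∑ k ∈ Aᶜ, W u k * PPRaux.res Z x k v) / (1 - σ) := by
          rw [zero_add, Finset.sum_div]
  have key : ∀ v, u ≠ v → PPRaux.res M x u v
      = x * PPRaux.res M x u u * ((∑ k ∈ Aᶜ, W u k * PPRaux.res Z x k v) / (1 - σ)) := by
    intro v hv
    have h := PPRaux.decomp hMS hZS hx0 hx1 hZu hMZ v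
    rw [if_neg hv, zero_add, hGv v] at h
    exact h
  have hPuu : (0:ℝ) < PPRaux.res M x u u :=
    lt_of_lt_of_le one_pos (PPRaux.res_ge_one hMS hx0 hx1 u)
  set SR : ℝ := ∑ k ∈ Aᶜ, W u k * PPRaux.res Z x k rec with hSR
  set SS : ℝ := ∑ k ∈ Aᶜ, W u k * PPRaux.res Z x k recStar with hSS
  have lhs_iff : (PPR M α u rec < PPR M α u recStar) ↔ SR < SS := by
    rw [hPPRM rec, hPPRM recStar, key rec (Ne.symm hrec), key recStar (Ne.symm hrecStar)]
    rw [mul_lt_mul_iff_right₀ hα0, mul_lt_mul_iff_right₀ (by positivity : (0:ℝ) < x * PPRaux.res M x u u)]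
    exact div_lt_div_iff_of_pos_right h1σ
  have rhs_eq : ∑ n ∈ Aᶜ, W u n * (PPR Z α n rec - PPR Z α n recStar) = α * (SR - SS) := by
    calc ∑ n ∈ Aᶜ, W u n * (PPR Z α n rec - PPR Z α n recStar)
        = ∑ n ∈ Aᶜ, (α * (W u n * PPRaux.res Z x n rec)
            - α * (W u n * PPRaux.res Z x n recStar)) := by
          refine Finset.sum_congr rfl fun n _ => ?_
          rw [hPPRZ n rec, hPPRZ n recStar]; ring
      _ = α * SR - α * SS := by
          rw [Finset.sum_sub_distrib, ← Finset.mul_sum, ← Finset.mul_sum]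
      _ = α * (SR - SS) := by ring
  rw [lhs_iff, rhs_eq]
  constructor
  · intro h; nlinarith
  · intro h; nlinarith
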